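/- Let i : B → A be a k-linear X-functor from a diagonal k-linear category B to a k-linear category A, and assume A is locally finite as a left B-module, i.e. each A_{xy} is finitely generated projective as a left B_x-module. Let 𝒜 = _B End(A) be the left endocluster, with 𝒜^x_{yz} = _{B_x}Hom(A_{xy}, A_{xz}). Then the categories Desc_B(A) of descent data and M_𝒜 of right 𝒜-modules are isomorphic, via the functor H sending a descent datum (M, σ) to M with action m·f = m_{<0>} f(m_{<1>}) ∈ M_{xz} for m ∈ M_{xy}, f ∈ 𝒜^x_{yz}, the inverse functor being defined using dual bases (Σ_i e_i* ⊗_{B_x} e_i for A_{xy}) by σ_{xy}(m) = Σ_i m·(i_x ∘ e_i*) ⊗_{B_x} e_i. -/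

import Mathlib

open TensorProduct BigOperators
noncomputable section
namespace Paper
variable (k : Type) [CommRing k]

-- [CORE assumed]
structure KCat (X : Type) where
  M : X → X → Type
  [acg : ∀ x y, AddCommGroup (M x y)]
  [mod : ∀ x y, Module k (M x y)]
  mul : ∀ {x y z : X}, M x y → M y z → M x z
  one : ∀ x : X, M x x
  add_mul : ∀ {x y z : X} (a a' : M x y) (b : M y z), mul (a + a') b = mul a b + mul a' b
  smul_mul : ∀ {x y z : X} (c : k) (a : M x y) (b : M y z), mul (c • a) b = c • mul a b
  mul_add : ∀ {x y z : X} (a : M x y) (b b' : M y z), mul a (b + b') = mul a b + mul a b'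
  mul_smul : ∀ {x y z : X} (c : k) (a : M x y) (b : M y z), mul a (c • b) = c • mul a b
  mul_assoc : ∀ {x y z w : X} (a : M x y) (b : M y z) (c : M z w),
    mul (mul a b) c = mul a (mul b c)
  one_mul : ∀ {x y : X} (a : M x y), mul (one x) a = a
  mul_one : ∀ {x y : X} (a : M x y), mul a (one y) = a
attribute [instance] KCat.acg KCat.mod
variable {k}
def KCat.mulLin {X : Type} (A : KCat k X) (x y z : X) :
    A.M x y →ₗ[k] A.M y z →ₗ[k] A.M x z :=
  LinearMap.mk₂ k A.mul A.add_mul A.smul_mul A.mul_add A.mul_smul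
@[simp] theorem KCat.mulLin_apply {X : Type} (A : KCat k X) (x y z : X)
    (a : A.M x y) (b : A.M y z) : A.mulLin x y z a b = A.mul a b := rfl
variable (k)
def relSub {S M N : Type} [AddCommGroup M] [Module k M] [AddCommGroup N] [Module k N]
    (ρ : M → S → M) (lam : S → N → N) : Submodule k (M ⊗[k] N) :=
  Submodule.span k {t | ∃ m b n, t = ρ m b ⊗ₜ[k] n - m ⊗ₜ[k] lam b n}
abbrev BT {S M N : Type} [AddCommGroup M] [Module k M] [AddCommGroup N] [Module k N]
    (ρ : M → S → M) (lam : S → N → N) : Type :=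
  (M ⊗[k] N) ⧸ relSub k ρ lam
def btmk {S M N : Type} [AddCommGroup M] [Module k M] [AddCommGroup N] [Module k N]
    (ρ : M → S → M) (lam : S → N → N) : M →ₗ[k] N →ₗ[k] BT k ρ lam :=
  (TensorProduct.mk k M N).compr₂ (relSub k ρ lam).mkQ
theorem btmk_rel {S M N : Type} [AddCommGroup M] [Module k M] [AddCommGroup N] [Module k N]
    (ρ : M → S → M) (lam : S → N → N) (m : M) (b : S) (n : N) :
    btmk k ρ lam (ρ m b) n = btmk k ρ lam m (lam b n) := by
  show (relSub k ρ lam).mkQ _ = (relSub k ρ lam).mkQ _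
  rw [Submodule.mkQ_apply, Submodule.mkQ_apply, Submodule.Quotient.eq]
  exact Submodule.subset_span ⟨m, b, n, rfl⟩
def btDesc {S M N P : Type} [AddCommGroup M] [Module k M] [AddCommGroup N] [Module k N]
    [AddCommGroup P] [Module k P]
    (ρ : M → S → M) (lam : S → N → N) (f : M →ₗ[k] N →ₗ[k] P)
    (hf : ∀ m b n, f (ρ m b) n = f m (lam b n)) :
    BT k ρ lam →ₗ[k] P :=
  Submodule.liftQ _ (TensorProduct.lift f) (by
    rw [relSub, Submodule.span_le]
    rintro t ⟨m, b, n, rfl⟩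
    simp [SetLike.mem_coe, LinearMap.mem_ker, map_sub, hf m b n])
@[simp] theorem btDesc_mk {S M N P : Type} [AddCommGroup M] [Module k M] [AddCommGroup N]
    [Module k N] [AddCommGroup P] [Module k P]
    (ρ : M → S → M) (lam : S → N → N) (f : M →ₗ[k] N →ₗ[k] P)
    (hf : ∀ m b n, f (ρ m b) n = f m (lam b n)) (m : M) (n : N) :
    btDesc k ρ lam f hf (btmk k ρ lam m n) = f m n := by
  simp [btDesc, btmk, LinearMap.compr₂_apply, TensorProduct.mk_apply]
-- [END CORE]

/-- A diagonal `k`-linear category: a family of (not necessarily commutative,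
associative, unital) `k`-algebras indexed by `X`. -/
structure DiagAlg (X : Type) where
  C : X → Type
  [acg : ∀ x, AddCommGroup (C x)]
  [mod : ∀ x, Module k (C x)]
  mul : ∀ {x : X}, C x → C x → C x
  one : ∀ x : X, C x
  add_mul : ∀ {x : X} (a a' b : C x), mul (a + a') b = mul a b + mul a' b
  smul_mul : ∀ {x : X} (c : k) (a b : C x), mul (c • a) b = c • mul a b
  mul_add : ∀ {x : X} (a b b' : C x), mul a (b + b') = mul a b + mul a b'
  mul_smul : ∀ {x : X} (c : k) (a b : C x), mul a (c • b) = c • mul a b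
  mul_assoc : ∀ {x : X} (a b c : C x), mul (mul a b) c = mul a (mul b c)
  one_mul : ∀ {x : X} (a : C x), mul (one x) a = a
  mul_one : ∀ {x : X} (a : C x), mul a (one x) = a

attribute [instance] DiagAlg.acg DiagAlg.mod

variable {k}

/-- A `k`-linear `X`-functor from a diagonal category `B` to `A`: a family of
`k`-algebra maps `i x : B x → A x x`. -/
structure XFun {X : Type} (B : DiagAlg k X) (A : KCat k X) where
  i : ∀ x, B.C x →ₗ[k] A.M x x
  i_mul : ∀ x (b b' : B.C x), i x (B.mul b b') = A.mul (i x b) (i x b')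
  i_one : ∀ x, i x (B.one x) = A.one x

/-- A family of right `B_x`-modules (an object of `D_k(X)` with right `B`-action). -/
structure DModData {X : Type} (B : DiagAlg k X) where
  N : X → Type
  [acg : ∀ x, AddCommGroup (N x)]
  [mod : ∀ x, Module k (N x)]
  ract : ∀ {x : X}, N x → B.C x → N x

attribute [instance] DModData.acg DModData.mod

/-- The axioms making `Nd` an object of `D_k(X)_B`. -/
structure IsDMod {X : Type} {B : DiagAlg k X} (Nd : DModData B) : Prop where
  add_ract : ∀ {x : X} (n n' : Nd.N x) (b : B.C x), Nd.ract (n + n') b = Nd.ract n b + Nd.ract n' b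
  ract_add : ∀ {x : X} (n : Nd.N x) (b b' : B.C x), Nd.ract n (b + b') = Nd.ract n b + Nd.ract n b'
  smul_ract : ∀ {x : X} (c : k) (n : Nd.N x) (b : B.C x), Nd.ract (c • n) b = c • Nd.ract n b
  ract_smul : ∀ {x : X} (c : k) (n : Nd.N x) (b : B.C x), Nd.ract n (c • b) = c • Nd.ract n b
  ract_assoc : ∀ {x : X} (n : Nd.N x) (b b' : B.C x),
    Nd.ract (Nd.ract n b) b' = Nd.ract n (B.mul b b')
  ract_one : ∀ {x : X} (n : Nd.N x), Nd.ract n (B.one x) = n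

/-- Morphisms in `D_k(X)_B`. -/
structure IsDModHom {X : Type} {B : DiagAlg k X} (Nd Nd' : DModData B)
    (g : ∀ x, Nd.N x → Nd'.N x) : Prop where
  map_add : ∀ x (n n' : Nd.N x), g x (n + n') = g x n + g x n'
  map_smul : ∀ x (c : k) (n : Nd.N x), g x (c • n) = c • g x n
  map_ract : ∀ x (n : Nd.N x) (b : B.C x), g x (Nd.ract n b) = Nd'.ract (g x n) b

/-- A right module (in `M_k(X)`) over the `k`-linear category `A` (data only). -/
structure RModData {X : Type} (A : KCat k X) where
  M : X → X → Type
  [acg : ∀ x y, AddCommGroup (M x y)]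
  [mod : ∀ x y, Module k (M x y)]
  act : ∀ {x y z : X}, M x y → A.M y z → M x z

attribute [instance] RModData.acg RModData.mod

/-- The axioms of a right `A`-module. -/
structure IsRMod {X : Type} {A : KCat k X} (Md : RModData A) : Prop where
  add_act : ∀ {x y z : X} (m m' : Md.M x y) (a : A.M y z), Md.act (m + m') a = Md.act m a + Md.act m' a
  act_add : ∀ {x y z : X} (m : Md.M x y) (a a' : A.M y z), Md.act m (a + a') = Md.act m a + Md.act m a'
  smul_act : ∀ {x y z : X} (c : k) (m : Md.M x y) (a : A.M y z), Md.act (c • m) a = c • Md.act m a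
  act_smul : ∀ {x y z : X} (c : k) (m : Md.M x y) (a : A.M y z), Md.act m (c • a) = c • Md.act m a
  act_assoc : ∀ {x y z w : X} (m : Md.M x y) (a : A.M y z) (b : A.M z w),
    Md.act (Md.act m a) b = Md.act m (A.mul a b)
  act_one : ∀ {x y : X} (m : Md.M x y), Md.act m (A.one y) = m

/-- Morphisms of right `A`-modules. -/
structure IsRModHom {X : Type} {A : KCat k X} (Md Md' : RModData A)
    (f : ∀ x y, Md.M x y → Md'.M x y) : Prop where
  map_add : ∀ x y (m m' : Md.M x y), f x y (m + m') = f x y m + f x y m'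
  map_smul : ∀ x y (c : k) (m : Md.M x y), f x y (c • m) = c • f x y m
  map_act : ∀ x y z (m : Md.M x y) (a : A.M y z), f x z (Md.act m a) = Md'.act (f x y m) a

section Descent

variable {X : Type} (A : KCat k X) (B : DiagAlg k X) (F : XFun B A)

/-- `M_{xx} ⊗_{B_x} A_{xy}`, for a right `A`-module `M`, where `B` acts via `i = F.i`. -/
abbrev DTc (Md : RModData A) (x y : X) : Type :=
  BT k (fun (m : Md.M x x) (b : B.C x) => Md.act m (F.i x b))
       (fun (b : B.C x) (a : A.M x y) => A.mul (F.i x b) a)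

abbrev dtmk (Md : RModData A) (x y : X) :
    Md.M x x →ₗ[k] A.M x y →ₗ[k] DTc A B F Md x y :=
  btmk k _ _

/-- Right multiplication by `a : A_{yz}` on the second factor of `M_{xx} ⊗_{B_x} A_{xy}`. -/
def dtRmul (Md : RModData A) {x y z : X} (a : A.M y z) :
    DTc A B F Md x y →ₗ[k] DTc A B F Md x z :=
  btDesc k _ _ ((dtmk A B F Md x z).compl₂ ((A.mulLin x y z).flip a)) (by
    intro m b a'
    simp only [LinearMap.compl₂_apply, LinearMap.flip_apply, KCat.mulLin_apply]
    rw [A.mul_assoc]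
    exact btmk_rel k _ _ m b (A.mul a' a))

@[simp] theorem dtRmul_mk (Md : RModData A) {x y z : X} (a : A.M y z)
    (m : Md.M x x) (a' : A.M x y) :
    dtRmul A B F Md a (dtmk A B F Md x y m a') = dtmk A B F Md x z m (A.mul a' a) := by
  simp [dtRmul]

/-- `(M_{xx} ⊗_{B_x} A_{xx}) ⊗_{B_x} A_{xy}`. -/
abbrev DT2c (Md : RModData A) (x y : X) : Type :=
  BT k (fun (t : DTc A B F Md x x) (b : B.C x) => dtRmul A B F Md (F.i x b) t)
       (fun (b : B.C x) (a : A.M x y) => A.mul (F.i x b) a)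

abbrev dt2mk (Md : RModData A) (x y : X) :
    DTc A B F Md x x →ₗ[k] A.M x y →ₗ[k] DT2c A B F Md x y :=
  btmk k _ _

/-- A descent datum: a right `A`-module together with the maps `σ_{xy}`. -/
structure DescData where
  Md : RModData A
  sig : ∀ (x y : X), Md.M x y → DTc A B F Md x y

/-- The axioms of a descent datum.  The conditions `c2` and `c3` are expressed via
(arbitrary) representatives `σ_{xy}(m) = ∑ⱼ m0 j ⊗ m1 j` of the element `σ_{xy}(m)`
of the balanced tensor product. -/
structure IsDesc (D : DescData A B F) : Prop where
  mod : IsRMod D.Md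
  sig_add : ∀ x y (m m' : D.Md.M x y), D.sig x y (m + m') = D.sig x y m + D.sig x y m'
  sig_smul : ∀ x y (c : k) (m : D.Md.M x y), D.sig x y (c • m) = c • D.sig x y m
  c1 : ∀ x y z (m : D.Md.M x y) (a : A.M y z),
    D.sig x z (D.Md.act m a) = dtRmul A B F D.Md a (D.sig x y m)
  c2 : ∀ x y (m : D.Md.M x y) (n : ℕ) (m0 : Fin n → D.Md.M x x) (m1 : Fin n → A.M x y),
    D.sig x y m = ∑ j, dtmk A B F D.Md x y (m0 j) (m1 j) →
    ∑ j, dt2mk A B F D.Md x y (D.sig x x (m0 j)) (m1 j)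
      = ∑ j, dt2mk A B F D.Md x y (dtmk A B F D.Md x x (m0 j) (A.one x)) (m1 j)
  c3 : ∀ x y (m : D.Md.M x y) (n : ℕ) (m0 : Fin n → D.Md.M x x) (m1 : Fin n → A.M x y),
    D.sig x y m = ∑ j, dtmk A B F D.Md x y (m0 j) (m1 j) →
    ∑ j, D.Md.act (m0 j) (m1 j) = m

/-- Morphisms of descent data. -/
structure IsDescHom (D D' : DescData A B F) (f : ∀ x y, D.Md.M x y → D'.Md.M x y) : Prop where
  mod : IsRModHom D.Md D'.Md f
  compat : ∀ x y (m : D.Md.M x y) (n : ℕ) (m0 : Fin n → D.Md.M x x) (m1 : Fin n → A.M x y),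
    D.sig x y m = ∑ j, dtmk A B F D.Md x y (m0 j) (m1 j) →
    D'.sig x y (f x y m) = ∑ j, dtmk A B F D'.Md x y (f x x (m0 j)) (m1 j)

/-- `G(M)_x = { m ∈ M_{xx} | σ_{xx}(m) = m ⊗ 1_x }`. -/
def Gset (D : DescData A B F) (x : X) : Set (D.Md.M x x) :=
  {m | D.sig x x m = dtmk A B F D.Md x x m (A.one x)}

/-- `N_x ⊗_{B_x} A_{xy}` for a diagonal right `B`-module `N`. -/
abbrev FTc (Nd : DModData B) (x y : X) : Type :=
  BT k (fun (n : Nd.N x) (b : B.C x) => Nd.ract n b)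
       (fun (b : B.C x) (a : A.M x y) => A.mul (F.i x b) a)

abbrev ftmk (Nd : DModData B) (x y : X) :
    Nd.N x →ₗ[k] A.M x y →ₗ[k] FTc A B F Nd x y :=
  btmk k _ _

/-- The right `A`-action `(n ⊗ a)·b := n ⊗ ab` on `F(N)`. -/
def ftRmul (Nd : DModData B) {x y z : X} (a : A.M y z) :
    FTc A B F Nd x y →ₗ[k] FTc A B F Nd x z :=
  btDesc k _ _ ((ftmk A B F Nd x z).compl₂ ((A.mulLin x y z).flip a)) (by
    intro m b a'
    simp only [LinearMap.compl₂_apply, LinearMap.flip_apply, KCat.mulLin_apply]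
    rw [A.mul_assoc]
    exact btmk_rel k _ _ m b (A.mul a' a))

@[simp] theorem ftRmul_mk (Nd : DModData B) {x y z : X} (a : A.M y z)
    (n : Nd.N x) (a' : A.M x y) :
    ftRmul A B F Nd a (ftmk A B F Nd x y n a') = ftmk A B F Nd x z n (A.mul a' a) := by
  simp [ftRmul]

/-- The right `A`-module `F(N)`. -/
def FNMod (Nd : DModData B) : RModData A where
  M := FTc A B F Nd
  act := fun {x y z} t a => ftRmul A B F Nd a t

@[simp] theorem FNMod_act (Nd : DModData B) {x y z : X} (t : FTc A B F Nd x y) (a : A.M y z) :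
    (FNMod A B F Nd).act t a = ftRmul A B F Nd a t := rfl

/-- `n ↦ n ⊗ 1_x` as a linear map `N_x → F(N)_{xx}`. -/
def etaLin (Nd : DModData B) (x : X) : Nd.N x →ₗ[k] FTc A B F Nd x x where
  toFun := fun n => ftmk A B F Nd x x n (A.one x)
  map_add' := by intro n n'; simp [map_add]
  map_smul' := by intro c n; simp [map_smul]

@[simp] theorem etaLin_apply (Nd : DModData B) (x : X) (n : Nd.N x) :
    etaLin A B F Nd x n = ftmk A B F Nd x x n (A.one x) := rfl

/-- The descent map `σ_{xy}(n ⊗ a) = (n ⊗ 1_x) ⊗ a` of `F(N)`. -/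
def FNsig (Nd : DModData B) (x y : X) :
    FTc A B F Nd x y →ₗ[k] DTc A B F (FNMod A B F Nd) x y :=
  btDesc k (fun (n : Nd.N x) (b : B.C x) => Nd.ract n b)
    (fun (b : B.C x) (a : A.M x y) => A.mul (F.i x b) a)
    ((dtmk A B F (FNMod A B F Nd) x y).comp (etaLin A B F Nd x)) (by
    intro n b a
    show (dtmk A B F (FNMod A B F Nd) x y) (ftmk A B F Nd x x (Nd.ract n b) (A.one x)) a
      = (dtmk A B F (FNMod A B F Nd) x y) (ftmk A B F Nd x x n (A.one x)) (A.mul (F.i x b) a)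
    rw [btmk_rel k _ _ n b (A.one x), A.mul_one]
    have h2 := btmk_rel k
      (fun (t : (FNMod A B F Nd).M x x) (b : B.C x) => (FNMod A B F Nd).act t (F.i x b))
      (fun (b : B.C x) (a : A.M x y) => A.mul (F.i x b) a)
      (ftmk A B F Nd x x n (A.one x)) b a
    rw [← h2]
    have h3 : (FNMod A B F Nd).act (ftmk A B F Nd x x n (A.one x)) (F.i x b)
        = ftmk A B F Nd x x n (F.i x b) := by
      show ftRmul A B F Nd (F.i x b) (ftmk A B F Nd x x n (A.one x)) = _
      rw [ftRmul_mk, A.one_mul]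
    rw [h3])

@[simp] theorem FNsig_mk (Nd : DModData B) (x y : X) (n : Nd.N x) (a : A.M x y) :
    FNsig A B F Nd x y (ftmk A B F Nd x y n a)
      = dtmk A B F (FNMod A B F Nd) x y (ftmk A B F Nd x x n (A.one x)) a := rfl

/-- The descent datum `F(N)`. -/
def FNDesc (Nd : DModData B) : DescData A B F where
  Md := FNMod A B F Nd
  sig := fun x y t => FNsig A B F Nd x y t

end Descent

section MapLeft

variable {X : Type}

/-- `g ⊗ id` on balanced tensor products. -/
def btMapLeft {S N N' Q : Type} [AddCommGroup N] [Module k N] [AddCommGroup N'] [Module k N']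
    [AddCommGroup Q] [Module k Q]
    (ρ : N → S → N) (ρ' : N' → S → N') (lam : S → Q → Q)
    (g : N →ₗ[k] N') (hg : ∀ n b, g (ρ n b) = ρ' (g n) b) :
    BT k ρ lam →ₗ[k] BT k ρ' lam :=
  btDesc k ρ lam ((btmk k ρ' lam).comp g) (by
    intro n b q
    simp only [LinearMap.comp_apply, hg]
    exact btmk_rel k ρ' lam (g n) b q)

@[simp] theorem btMapLeft_mk {S N N' Q : Type} [AddCommGroup N] [Module k N] [AddCommGroup N']
    [Module k N'] [AddCommGroup Q] [Module k Q]
    (ρ : N → S → N) (ρ' : N' → S → N') (lam : S → Q → Q)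
    (g : N →ₗ[k] N') (hg : ∀ n b, g (ρ n b) = ρ' (g n) b) (n : N) (q : Q) :
    btMapLeft ρ ρ' lam g hg (btmk k ρ lam n q) = btmk k ρ' lam (g n) q := by
  simp [btMapLeft]

end MapLeft

section Descent2

variable {X : Type} (A : KCat k X) (B : DiagAlg k X) (F : XFun B A)

/-- `F(g) = g ⊗ A` for a morphism `g` of diagonal modules. -/
def FNMap (Nd Nd' : DModData B) (g : ∀ x, Nd.N x →ₗ[k] Nd'.N x)
    (hg : ∀ x (n : Nd.N x) (b : B.C x), g x (Nd.ract n b) = Nd'.ract (g x n) b)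
    (x y : X) : FTc A B F Nd x y →ₗ[k] FTc A B F Nd' x y :=
  btMapLeft _ _ _ (g x) (hg x)

/-- `G(M)_x` as a `k`-submodule of `M_{xx}`. -/
def Gsub (D : DescData A B F) (hD : IsDesc A B F D) (x : X) :
    Submodule k (D.Md.M x x) where
  carrier := Gset A B F D x
  add_mem' := by
    intro a b ha hb
    simp only [Gset, Set.mem_setOf_eq] at *
    rw [hD.sig_add, ha, hb]
    simp [map_add]
  zero_mem' := by
    have h0 : D.sig x x (0 : D.Md.M x x) = 0 := by
      have := hD.sig_smul x x (0 : k) 0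
      simpa using this
    simp only [Gset, Set.mem_setOf_eq, h0, map_zero, LinearMap.zero_apply]
  smul_mem' := by
    intro c m hm
    simp only [Gset, Set.mem_setOf_eq] at *
    rw [hD.sig_smul, hm]
    simp [map_smul]

theorem Gsub_closed (D : DescData A B F) (hD : IsDesc A B F D) (x : X)
    (m : D.Md.M x x) (hm : m ∈ Gsub A B F D hD x) (b : B.C x) :
    D.Md.act m (F.i x b) ∈ Gsub A B F D hD x := by
  have hm' : D.sig x x m = dtmk A B F D.Md x x m (A.one x) := hm
  show D.sig x x (D.Md.act m (F.i x b)) = dtmk A B F D.Md x x (D.Md.act m (F.i x b)) (A.one x)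
  rw [hD.c1, hm', dtRmul_mk, A.one_mul]
  rw [btmk_rel k (fun (m : D.Md.M x x) (b : B.C x) => D.Md.act m (F.i x b))
      (fun (b : B.C x) (a : A.M x x) => A.mul (F.i x b) a) m b (A.one x), A.mul_one]

/-- `G(M)` as a diagonal right `B`-module. -/
def GMod (D : DescData A B F) (hD : IsDesc A B F D) : DModData B where
  N := fun x => ↥(Gsub A B F D hD x)
  ract := fun {x} m b => ⟨D.Md.act m.1 (F.i x b), Gsub_closed A B F D hD x m.1 m.2 b⟩

/-- The counit `ε^M : G(M)_x ⊗_{B_x} A_{xy} → M_{xy}`, `m ⊗ a ↦ ma`. -/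
def epsMap (D : DescData A B F) (hD : IsDesc A B F D) (x y : X) :
    FTc A B F (GMod A B F D hD) x y →ₗ[k] D.Md.M x y :=
  btDesc k
    (fun (m : ↥(Gsub A B F D hD x)) (b : B.C x) =>
      (⟨D.Md.act m.1 (F.i x b), Gsub_closed A B F D hD x m.1 m.2 b⟩ : ↥(Gsub A B F D hD x)))
    (fun (b : B.C x) (a : A.M x y) => A.mul (F.i x b) a)
    (LinearMap.mk₂ k (fun (m : ↥(Gsub A B F D hD x)) (a : A.M x y) => D.Md.act m.1 a)
      (by intro m m' a; exact hD.mod.add_act m.1 m'.1 a)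
      (by intro c m a; exact hD.mod.smul_act c m.1 a)
      (by intro m a a'; exact hD.mod.act_add m.1 a a')
      (by intro c m a; exact hD.mod.act_smul c m.1 a))
    (by intro m b a; exact hD.mod.act_assoc m.1 (F.i x b) a)

@[simp] theorem epsMap_mk (D : DescData A B F) (hD : IsDesc A B F D) (x y : X)
    (m : ↥(Gsub A B F D hD x)) (a : A.M x y) :
    epsMap A B F D hD x y (ftmk A B F (GMod A B F D hD) x y m a) = D.Md.act m.1 a := rfl

/-- The unit `η^N_x : N_x → F(N)_{xx}`, `n ↦ n ⊗ 1_x` (its corestriction to `GF(N)` is the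
unit of the adjunction). -/
def etaMap (Nd : DModData B) (x : X) : Nd.N x → FTc A B F Nd x x :=
  fun n => ftmk A B F Nd x x n (A.one x)

end Descent2

section Flat

variable {X : Type} (B : DiagAlg k X)

/-- The axioms of a right module over the `k`-algebra `B_x`. -/
def IsRModOver (x : X) (N : Type) [AddCommGroup N] [Module k N] (ρ : N → B.C x → N) : Prop :=
  (∀ n n' b, ρ (n + n') b = ρ n b + ρ n' b) ∧
  (∀ n b b', ρ n (b + b') = ρ n b + ρ n b') ∧
  (∀ (c : k) n b, ρ (c • n) b = c • ρ n b) ∧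
  (∀ (c : k) n b, ρ n (c • b) = c • ρ n b) ∧
  (∀ n b b', ρ (ρ n b) b' = ρ n (B.mul b b')) ∧
  (∀ n, ρ n (B.one x) = n)

/-- `Q` (with left `B_x`-action `lam`) is flat as a left `B_x`-module:  `- ⊗_{B_x} Q`
preserves injectivity of morphisms of right `B_x`-modules. -/
def LeftFlat (x : X) (Q : Type) [AddCommGroup Q] [Module k Q] (lam : B.C x → Q → Q) : Prop :=
  ∀ (N N' : Type) [AddCommGroup N] [Module k N] [AddCommGroup N'] [Module k N']
    (ρ : N → B.C x → N) (ρ' : N' → B.C x → N'),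
    IsRModOver B x N ρ → IsRModOver B x N' ρ' →
    ∀ (g : N →ₗ[k] N') (hg : ∀ n b, g (ρ n b) = ρ' (g n) b),
      Function.Injective g → Function.Injective (btMapLeft ρ ρ' lam g hg)

/-- `Q` is faithfully flat as a left `B_x`-module: it is flat, and `N ⊗_{B_x} Q = 0`
forces `N = 0`. -/
def LeftFaithfullyFlat (x : X) (Q : Type) [AddCommGroup Q] [Module k Q]
    (lam : B.C x → Q → Q) : Prop :=
  LeftFlat B x Q lam ∧
  ∀ (N : Type) [AddCommGroup N] [Module k N] (ρ : N → B.C x → N), IsRModOver B x N ρ →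
    (∀ t : BT k ρ lam, t = 0) → ∀ n : N, n = 0

end Flat

section Incl

variable {X : Type} (A : KCat k X) (B : DiagAlg k X) (F : XFun B A)

/-- The inclusion `G(M)_x ⊗_{B_x} A_{xy} → M_{xx} ⊗_{B_x} A_{xy}`. -/
def inclMap (D : DescData A B F) (hD : IsDesc A B F D) (x y : X) :
    FTc A B F (GMod A B F D hD) x y →ₗ[k] DTc A B F D.Md x y :=
  btMapLeft (fun (m : (GMod A B F D hD).N x) (b : B.C x) => (GMod A B F D hD).ract m b)
    (fun (m : D.Md.M x x) (b : B.C x) => D.Md.act m (F.i x b))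
    (fun (b : B.C x) (a : A.M x y) => A.mul (F.i x b) a)
    (Gsub A B F D hD x).subtype (fun n b => rfl)

end Incl

section Cluster

variable {X : Type} (A : KCat k X) (B : DiagAlg k X) (F : XFun B A)

theorem mulZero {x y z : X} (a : A.M x y) : A.mul a (0 : A.M y z) = 0 := by
  have := A.mul_smul (0 : k) a (0 : A.M y z); simpa using this

theorem zeroMul {x y z : X} (b : A.M y z) : A.mul (0 : A.M x y) b = 0 := by
  have := A.smul_mul (0 : k) (0 : A.M x y) b; simpa using this

/-- The endocluster components `𝒜^x_{yz} = {}_{B_x}Hom(A_{xy}, A_{xz})` of left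
`B_x`-linear maps, as a `k`-submodule of the `k`-linear maps. -/
def BLinSub (x y z : X) : Submodule k (A.M x y →ₗ[k] A.M x z) where
  carrier := {f | ∀ (b : B.C x) (a : A.M x y), f (A.mul (F.i x b) a) = A.mul (F.i x b) (f a)}
  add_mem' := by
    intro f g hf hg b a
    simp only [Set.mem_setOf_eq] at hf hg
    simp [LinearMap.add_apply, hf b a, hg b a, A.mul_add]
  zero_mem' := by
    intro b a
    simp [mulZero A]
  smul_mem' := by
    intro c f hf b a
    simp only [Set.mem_setOf_eq] at hf
    simp [LinearMap.smul_apply, hf b a, A.mul_smul]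

/-- Multiplication in the endocluster (opposite composition): `f * g = g ∘ f`. -/
def compBL {x y z w : X} (f : ↥(BLinSub A B F x y z)) (g : ↥(BLinSub A B F x z w)) :
    ↥(BLinSub A B F x y w) :=
  ⟨g.1.comp f.1, by
    intro b a
    have hf : ∀ (b : B.C x) (a : A.M x y), f.1 (A.mul (F.i x b) a) = A.mul (F.i x b) (f.1 a) := f.2
    have hg : ∀ (b : B.C x) (a : A.M x z), g.1 (A.mul (F.i x b) a) = A.mul (F.i x b) (g.1 a) := g.2
    simp [LinearMap.comp_apply, hf b a, hg b (f.1 a)]⟩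

/-- The identity, as the unit of the endocluster. -/
def idBL (x y : X) : ↥(BLinSub A B F x y y) := ⟨LinearMap.id, fun _ _ => rfl⟩

/-- A right module over the endocluster `𝒜 = {}_B End(A)` (data only). -/
structure CModData where
  M : X → X → Type
  [acg : ∀ x y, AddCommGroup (M x y)]
  [mod : ∀ x y, Module k (M x y)]
  act : ∀ {x y z : X}, M x y → ↥(BLinSub A B F x y z) → M x z

attribute [instance] CModData.acg CModData.mod

/-- The axioms of a right `𝒜`-module. -/
structure IsCMod (Md : CModData A B F) : Prop where
  add_act : ∀ {x y z : X} (m m' : Md.M x y) (f : ↥(BLinSub A B F x y z)),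
    Md.act (m + m') f = Md.act m f + Md.act m' f
  act_add : ∀ {x y z : X} (m : Md.M x y) (f f' : ↥(BLinSub A B F x y z)),
    Md.act m (f + f') = Md.act m f + Md.act m f'
  smul_act : ∀ {x y z : X} (c : k) (m : Md.M x y) (f : ↥(BLinSub A B F x y z)),
    Md.act (c • m) f = c • Md.act m f
  act_smul : ∀ {x y z : X} (c : k) (m : Md.M x y) (f : ↥(BLinSub A B F x y z)),
    Md.act m (c • f) = c • Md.act m f
  act_comp : ∀ {x y z w : X} (m : Md.M x y) (f : ↥(BLinSub A B F x y z))
    (g : ↥(BLinSub A B F x z w)), Md.act (Md.act m f) g = Md.act m (compBL A B F f g)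
  act_id : ∀ {x y : X} (m : Md.M x y), Md.act m (idBL A B F x y) = m

/-- Morphisms of right `𝒜`-modules. -/
structure IsCModHom (Md Md' : CModData A B F) (φ : ∀ x y, Md.M x y → Md'.M x y) : Prop where
  map_add : ∀ x y (m m' : Md.M x y), φ x y (m + m') = φ x y m + φ x y m'
  map_smul : ∀ x y (c : k) (m : Md.M x y), φ x y (c • m) = c • φ x y m
  map_act : ∀ x y z (m : Md.M x y) (f : ↥(BLinSub A B F x y z)),
    φ x z (Md.act m f) = Md'.act (φ x y m) f

/-- `M_{xx} ⊗_{B_x} A_{xy} → M_{xz}`, `m₀ ⊗ a ↦ m₀ · f(a)`, for a descent datum. -/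
def HactL (D : DescData A B F) (hD : IsDesc A B F D) {x y z : X}
    (f : ↥(BLinSub A B F x y z)) : DTc A B F D.Md x y →ₗ[k] D.Md.M x z :=
  btDesc k _ _
    (LinearMap.mk₂ k (fun (m0 : D.Md.M x x) (a : A.M x y) => D.Md.act m0 (f.1 a))
      (fun m0 m0' a => hD.mod.add_act m0 m0' (f.1 a))
      (fun c m0 a => hD.mod.smul_act c m0 (f.1 a))
      (by
        intro m0 a a'
        show D.Md.act m0 (f.1 (a + a')) = D.Md.act m0 (f.1 a) + D.Md.act m0 (f.1 a')
        rw [map_add]; exact hD.mod.act_add m0 (f.1 a) (f.1 a'))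
      (by
        intro c m0 a
        show D.Md.act m0 (f.1 (c • a)) = c • D.Md.act m0 (f.1 a)
        rw [map_smul]; exact hD.mod.act_smul c m0 (f.1 a)))
    (by
      intro m0 b a
      show D.Md.act (D.Md.act m0 (F.i x b)) (f.1 a) = D.Md.act m0 (f.1 (A.mul (F.i x b) a))
      have hf : ∀ (b : B.C x) (a : A.M x y), f.1 (A.mul (F.i x b) a) = A.mul (F.i x b) (f.1 a) := f.2
      rw [hf b a]
      exact hD.mod.act_assoc m0 (F.i x b) (f.1 a))

/-- The right cluster action `m · f = m₍₀₎ f(m₍₁₎)` on a descent datum. -/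
def Hact (D : DescData A B F) (hD : IsDesc A B F D) {x y z : X}
    (m : D.Md.M x y) (f : ↥(BLinSub A B F x y z)) : D.Md.M x z :=
  HactL A B F D hD f (D.sig x y m)

/-- The right `𝒜`-module associated to a descent datum (the functor `H` on objects). -/
def HData (D : DescData A B F) (hD : IsDesc A B F D) : CModData A B F where
  M := D.Md.M
  act := fun m f => Hact A B F D hD m f

/-- Right multiplication `r_a` as an element of the endocluster. -/
def rmulBL {x y z : X} (a : A.M y z) : ↥(BLinSub A B F x y z) :=
  ⟨(A.mulLin x y z).flip a, by
    intro b a'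
    show A.mul (A.mul (F.i x b) a') a = A.mul (F.i x b) (A.mul a' a)
    exact A.mul_assoc _ _ _⟩

/-- The right `A`-module underlying a right `𝒜`-module (restriction along `a ↦ r_a`). -/
def KMod (Cd : CModData A B F) : RModData A where
  M := Cd.M
  act := fun m a => Cd.act m (rmulBL A B F a)

/-- `i_x ∘ a*` as an element of the endocluster, for a left `B_x`-linear
`a* : A_{xy} → B_x`. -/
def iestEl {x y : X} (est : A.M x y →ₗ[k] B.C x)
    (hst : ∀ (b : B.C x) (a : A.M x y), est (A.mul (F.i x b) a) = B.mul b (est a)) :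
    ↥(BLinSub A B F x y x) :=
  ⟨(F.i x).comp est, by
    intro b a
    show F.i x (est (A.mul (F.i x b) a)) = A.mul (F.i x b) (F.i x (est a))
    rw [hst b a, F.i_mul]⟩

/-- A choice of finite dual bases exhibiting each `A_{xy}` as a finitely generated
projective left `B_x`-module ("`A` is locally finite as a left `B`-module"). -/
structure DualBasis where
  nb : X → X → ℕ
  e : ∀ x y, Fin (nb x y) → A.M x y
  estar : ∀ x y, Fin (nb x y) → (A.M x y →ₗ[k] B.C x)
  estar_blin : ∀ x y (j : Fin (nb x y)) (b : B.C x) (a : A.M x y),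
    estar x y j (A.mul (F.i x b) a) = B.mul b (estar x y j a)
  dual : ∀ x y (a : A.M x y), (∑ j, A.mul (F.i x (estar x y j a)) (e x y j)) = a

/-- The descent map reconstructed from a right `𝒜`-module via a dual basis
(the functor `K` on objects). -/
def Ksig (Cd : CModData A B F) (db : DualBasis A B F) (x y : X) (m : Cd.M x y) :
    DTc A B F (KMod A B F Cd) x y :=
  ∑ j, dtmk A B F (KMod A B F Cd) x y
    (Cd.act m (iestEl A B F (db.estar x y j) (db.estar_blin x y j))) (db.e x y j)

/-- The descent datum associated to a right `𝒜`-module. -/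
def KDesc (Cd : CModData A B F) (db : DualBasis A B F) : DescData A B F where
  Md := KMod A B F Cd
  sig := fun x y m => Ksig A B F Cd db x y m

end Cluster

section Aux

theorem bt_ext {S M N P : Type} [AddCommGroup M] [Module k M] [AddCommGroup N] [Module k N]
    [AddCommGroup P] [Module k P] {ρ : M → S → M} {lam : S → N → N}
    {L1 L2 : BT k ρ lam →ₗ[k] P}
    (h : ∀ m n, L1 (btmk k ρ lam m n) = L2 (btmk k ρ lam m n)) : L1 = L2 := by
  apply Submodule.linearMap_qext
  exact TensorProduct.ext' h

theorem bt_repr {S M N : Type} [AddCommGroup M] [Module k M] [AddCommGroup N] [Module k N]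
    (ρ : M → S → M) (lam : S → N → N) (t : BT k ρ lam) :
    ∃ (n : ℕ) (m0 : Fin n → M) (m1 : Fin n → N),
      t = ∑ j, btmk k ρ lam (m0 j) (m1 j) := by
  obtain ⟨s, rfl⟩ := Submodule.mkQ_surjective _ t
  induction s using TensorProduct.induction_on with
  | zero => exact ⟨0, Fin.elim0, Fin.elim0, by simp⟩
  | tmul m n =>
      refine ⟨1, fun _ => m, fun _ => n, ?_⟩
      rw [Fin.sum_univ_one]; rfl
  | add s1 s2 h1 h2 =>
      obtain ⟨n1, a1, b1, e1⟩ := h1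
      obtain ⟨n2, a2, b2, e2⟩ := h2
      refine ⟨n1 + n2, Fin.append a1 a2, Fin.append b1 b2, ?_⟩
      rw [map_add, e1, e2, Fin.sum_univ_add]
      simp [Fin.append_left, Fin.append_right]

theorem sub_sum_apply {M N : Type} [AddCommGroup M] [Module k M] [AddCommGroup N] [Module k N]
    (p : Submodule k (M →ₗ[k] N)) {n : ℕ} (f : Fin n → ↥p) (c : M) :
    ((∑ j, f j : ↥p) : M →ₗ[k] N) c = ∑ j, (f j : M →ₗ[k] N) c := by
  rw [AddSubmonoidClass.coe_finset_sum, LinearMap.sum_apply]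

def mkLin {M N : Type} [AddCommGroup M] [Module k M] [AddCommGroup N] [Module k N]
    (f : M → N) (h1 : ∀ a b, f (a + b) = f a + f b) (h2 : ∀ (c : k) a, f (c • a) = c • f a) :
    M →ₗ[k] N :=
  { toFun := f, map_add' := h1, map_smul' := h2 }

variable {X : Type} (A : KCat k X) (B : DiagAlg k X) (F : XFun B A)

theorem sum_mul {x y z : X} {n : ℕ} (u : Fin n → A.M x y) (a : A.M y z) :
    A.mul (∑ i, u i) a = ∑ i, A.mul (u i) a :=
  map_sum ((A.mulLin x y z).flip a) u Finset.univ

theorem dtRmul_add (Md : RModData A) {x y z : X} (a a' : A.M y z) :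
    dtRmul A B F Md (x := x) (a + a') = dtRmul A B F Md a + dtRmul A B F Md a' := by
  apply bt_ext
  intro m nn
  simp [A.mul_add, map_add]

theorem dtRmul_smul (Md : RModData A) {x y z : X} (c : k) (a : A.M y z) :
    dtRmul A B F Md (x := x) (c • a) = c • dtRmul A B F Md a := by
  apply bt_ext
  intro m nn
  simp [A.mul_smul, map_smul]

theorem dtRmul_comp (Md : RModData A) {x y z w : X} (a : A.M y z) (a' : A.M z w)
    (t : DTc A B F Md x y) :
    dtRmul A B F Md a' (dtRmul A B F Md a t) = dtRmul A B F Md (A.mul a a') t := by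
  have h : (dtRmul A B F Md a').comp (dtRmul A B F Md (a : A.M y z) (x := x))
      = dtRmul A B F Md (A.mul a a') := by
    apply bt_ext
    intro m nn
    simp [A.mul_assoc]
  exact LinearMap.congr_fun h t

theorem dtmk_sum (Md : RModData A) (x y : X) {n : ℕ} (u : Fin n → Md.M x x) (a : A.M x y) :
    dtmk A B F Md x y (∑ j, u j) a = ∑ j, dtmk A B F Md x y (u j) a := by
  rw [map_sum, LinearMap.sum_apply]

def actL (Md : RModData A) (hM : IsRMod Md) {x y z : X} (a : A.M y z) :
    Md.M x y →ₗ[k] Md.M x z :=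
  mkLin (fun m => Md.act m a) (fun m m' => hM.add_act m m' a) (fun c m => hM.smul_act c m a)

theorem sig_sum (D : DescData A B F) (hD : IsDesc A B F D) (x y : X) {n : ℕ}
    (f : Fin n → D.Md.M x y) :
    D.sig x y (∑ j, f j) = ∑ j, D.sig x y (f j) :=
  map_sum (AddMonoidHom.mk' (D.sig x y) (hD.sig_add x y)) f Finset.univ

theorem HactL_mk (D : DescData A B F) (hD : IsDesc A B F D) {x y z : X}
    (f : ↥(BLinSub A B F x y z)) (m0 : D.Md.M x x) (a : A.M x y) :
    HactL A B F D hD f (dtmk A B F D.Md x y m0 a) = D.Md.act m0 (f.1 a) := rfl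

theorem Hact_repr (D : DescData A B F) (hD : IsDesc A B F D) {x y z : X} (m : D.Md.M x y)
    (f : ↥(BLinSub A B F x y z)) {n : ℕ} {m0 : Fin n → D.Md.M x x} {m1 : Fin n → A.M x y}
    (h : D.sig x y m = ∑ j, dtmk A B F D.Md x y (m0 j) (m1 j)) :
    Hact A B F D hD m f = ∑ j, D.Md.act (m0 j) (f.1 (m1 j)) := by
  show HactL A B F D hD f (D.sig x y m) = _
  rw [h, map_sum]
  exact Finset.sum_congr rfl fun j _ => HactL_mk A B F D hD f (m0 j) (m1 j)

theorem rmulBL_add {x y z : X} (a a' : A.M y z) :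
    rmulBL A B F (x := x) (a + a') = rmulBL A B F a + rmulBL A B F a' :=
  Subtype.ext (map_add ((A.mulLin x y z).flip) a a')

theorem rmulBL_smul {x y z : X} (c : k) (a : A.M y z) :
    rmulBL A B F (x := x) (c • a) = c • rmulBL A B F a :=
  Subtype.ext (map_smul ((A.mulLin x y z).flip) c a)

theorem compBL_rmul {x y z w : X} (a : A.M y z) (a' : A.M z w) :
    compBL A B F (rmulBL A B F (x := x) a) (rmulBL A B F a') = rmulBL A B F (A.mul a a') :=
  Subtype.ext (LinearMap.ext fun c => A.mul_assoc c a a')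

theorem rmulBL_one {x y : X} :
    rmulBL A B F (x := x) (A.one y) = idBL A B F x y :=
  Subtype.ext (LinearMap.ext fun c => A.mul_one c)

def cactR (Cd : CModData A B F) (hC : IsCMod A B F Cd) {x y z : X} (m : Cd.M x y) :
    ↥(BLinSub A B F x y z) →ₗ[k] Cd.M x z :=
  mkLin (fun f => Cd.act m f) (fun f f' => hC.act_add m f f') (fun c f => hC.act_smul c m f)

end Aux
section Aux2

variable {X : Type} (A : KCat k X) (B : DiagAlg k X) (F : XFun B A)

/-- `i_x ∘ e_j^*` as an element of the endocluster. -/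
abbrev dphi (db : DualBasis A B F) (x y : X) (j : Fin (db.nb x y)) :
    ↥(BLinSub A B F x y x) :=
  iestEl A B F (db.estar x y j) (db.estar_blin x y j)

theorem key1 (db : DualBasis A B F) {x y z : X} (a : A.M y z) (c : A.M x y)
    (j : Fin (db.nb x z)) :
    db.estar x z j (A.mul c a)
      = ∑ i, B.mul (db.estar x y i c) (db.estar x z j (A.mul (db.e x y i) a)) := by
  conv_lhs => rw [← db.dual x y c]
  rw [sum_mul, map_sum]
  refine Finset.sum_congr rfl fun i _ => ?_
  rw [A.mul_assoc, db.estar_blin]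

theorem key2 (db : DualBasis A B F) {x y z : X} (a : A.M y z) (j : Fin (db.nb x z)) :
    compBL A B F (rmulBL A B F a) (dphi A B F db x z j)
      = ∑ i, compBL A B F (dphi A B F db x y i)
          (rmulBL A B F (F.i x (db.estar x z j (A.mul (db.e x y i) a)))) := by
  apply Subtype.ext
  apply LinearMap.ext
  intro c
  rw [sub_sum_apply]
  show F.i x (db.estar x z j (A.mul c a)) = _
  rw [key1 A B F db a c j, map_sum]
  refine Finset.sum_congr rfl fun i _ => ?_
  rw [F.i_mul]
  rfl

def KsigL (Cd : CModData A B F) (hC : IsCMod A B F Cd) (db : DualBasis A B F) (x y : X) :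
    Cd.M x y →ₗ[k] DTc A B F (KMod A B F Cd) x y :=
  mkLin (Ksig A B F Cd db x y)
    (fun m m' => by
      simp only [Ksig, hC.add_act]
      rw [← Finset.sum_add_distrib]
      exact Finset.sum_congr rfl fun j _ => LinearMap.map_add₂ _ _ _ _)
    (fun c m => by
      simp only [Ksig, hC.smul_act, Finset.smul_sum]
      exact Finset.sum_congr rfl fun j _ => LinearMap.map_smul₂ _ _ _ _)

theorem cact_sum (Cd : CModData A B F) (hC : IsCMod A B F Cd) {x y z : X} (m : Cd.M x y)
    {n : ℕ} (g : Fin n → ↥(BLinSub A B F x y z)) :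
    Cd.act m (∑ i, g i) = ∑ i, Cd.act m (g i) :=
  map_sum (cactR A B F Cd hC m) g Finset.univ

theorem Ksig_act (Cd : CModData A B F) (hC : IsCMod A B F Cd) (db : DualBasis A B F)
    {x y z : X} (m : Cd.M x y) (a : A.M y z) :
    Ksig A B F Cd db x z ((KMod A B F Cd).act m a)
      = dtRmul A B F (KMod A B F Cd) a (Ksig A B F Cd db x y m) := by
  have hL : Ksig A B F Cd db x z ((KMod A B F Cd).act m a)
      = ∑ j, ∑ i, dtmk A B F (KMod A B F Cd) x z
          (Cd.act m (compBL A B F (dphi A B F db x y i)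
            (rmulBL A B F (F.i x (db.estar x z j (A.mul (db.e x y i) a)))))) (db.e x z j) := by
    refine Finset.sum_congr rfl fun j _ => ?_
    have e1 : Cd.act ((KMod A B F Cd).act m a) (dphi A B F db x z j)
        = ∑ i, Cd.act m (compBL A B F (dphi A B F db x y i)
            (rmulBL A B F (F.i x (db.estar x z j (A.mul (db.e x y i) a))))) := by
      have h0 : Cd.act ((KMod A B F Cd).act m a) (dphi A B F db x z j)
          = Cd.act m (compBL A B F (rmulBL A B F a) (dphi A B F db x z j)) :=
        hC.act_comp m (rmulBL A B F a) (dphi A B F db x z j)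
      rw [h0, key2 A B F db a j, cact_sum A B F Cd hC m]
    show dtmk A B F (KMod A B F Cd) x z (Cd.act ((KMod A B F Cd).act m a) (dphi A B F db x z j))
        (db.e x z j) = _
    rw [e1]
    exact dtmk_sum A B F (KMod A B F Cd) x z _ _
  have hR : dtRmul A B F (KMod A B F Cd) a (Ksig A B F Cd db x y m)
      = ∑ i, ∑ j, dtmk A B F (KMod A B F Cd) x z
          (Cd.act m (compBL A B F (dphi A B F db x y i)
            (rmulBL A B F (F.i x (db.estar x z j (A.mul (db.e x y i) a)))))) (db.e x z j) := by
    rw [Ksig, map_sum]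
    refine Finset.sum_congr rfl fun i _ => ?_
    refine (dtRmul_mk A B F (KMod A B F Cd) a _ _).trans ?_
    conv_lhs => rw [← db.dual x z (A.mul (db.e x y i) a)]
    rw [map_sum]
    refine Finset.sum_congr rfl fun j _ => ?_
    rw [← btmk_rel k
      (fun (m0 : (KMod A B F Cd).M x x) (b : B.C x) => (KMod A B F Cd).act m0 (F.i x b))
      (fun (b : B.C x) (a' : A.M x z) => A.mul (F.i x b) a')
      (Cd.act m (dphi A B F db x y i))
      (db.estar x z j (A.mul (db.e x y i) a)) (db.e x z j)]
    have h2 : (KMod A B F Cd).act (Cd.act m (dphi A B F db x y i))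
        (F.i x (db.estar x z j (A.mul (db.e x y i) a)))
        = Cd.act m (compBL A B F (dphi A B F db x y i)
            (rmulBL A B F (F.i x (db.estar x z j (A.mul (db.e x y i) a))))) :=
      hC.act_comp m _ _
    rw [h2]
  rw [hL, hR, Finset.sum_comm]

theorem Ksig_phi (Cd : CModData A B F) (hC : IsCMod A B F Cd) (db : DualBasis A B F)
    (x y : X) (m : Cd.M x y) (l : Fin (db.nb x y)) :
    Ksig A B F Cd db x x (Cd.act m (dphi A B F db x y l))
      = dtmk A B F (KMod A B F Cd) x x (Cd.act m (dphi A B F db x y l)) (A.one x) := by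
  have h1 : ∀ i : Fin (db.nb x x),
      Cd.act (Cd.act m (dphi A B F db x y l)) (dphi A B F db x x i)
        = (KMod A B F Cd).act (Cd.act m (dphi A B F db x y l))
            (F.i x (db.estar x x i (A.one x))) := by
    intro i
    show _ = Cd.act (Cd.act m (dphi A B F db x y l))
        (rmulBL A B F (F.i x (db.estar x x i (A.one x))))
    rw [hC.act_comp, hC.act_comp]
    congr 1
    apply Subtype.ext
    apply LinearMap.ext
    intro c
    show F.i x (db.estar x x i (F.i x (db.estar x y l c)))
      = A.mul (F.i x (db.estar x y l c)) (F.i x (db.estar x x i (A.one x)))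
    rw [← F.i_mul]
    congr 1
    conv_lhs => rw [← A.mul_one (F.i x (db.estar x y l c))]
    exact db.estar_blin x x i (db.estar x y l c) (A.one x)
  calc Ksig A B F Cd db x x (Cd.act m (dphi A B F db x y l))
      = ∑ i, dtmk A B F (KMod A B F Cd) x x
          ((KMod A B F Cd).act (Cd.act m (dphi A B F db x y l))
            (F.i x (db.estar x x i (A.one x)))) (db.e x x i) :=
        Finset.sum_congr rfl fun i _ => by rw [h1 i]
    _ = ∑ i, dtmk A B F (KMod A B F Cd) x x (Cd.act m (dphi A B F db x y l))
          (A.mul (F.i x (db.estar x x i (A.one x))) (db.e x x i)) :=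
        Finset.sum_congr rfl fun i _ =>
          btmk_rel k _ _ (Cd.act m (dphi A B F db x y l)) (db.estar x x i (A.one x)) (db.e x x i)
    _ = dtmk A B F (KMod A B F Cd) x x (Cd.act m (dphi A B F db x y l))
          (∑ i, A.mul (F.i x (db.estar x x i (A.one x))) (db.e x x i)) :=
        (map_sum (dtmk A B F (KMod A B F Cd) x x (Cd.act m (dphi A B F db x y l))) _
          Finset.univ).symm
    _ = dtmk A B F (KMod A B F Cd) x x (Cd.act m (dphi A B F db x y l)) (A.one x) := by
        rw [db.dual x x (A.one x)]

end Aux2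
section Aux3

variable {X : Type} (A : KCat k X) (B : DiagAlg k X) (F : XFun B A)

/-- `σ ⊗ id : M ⊗ A → (M ⊗ A) ⊗ A` for the reconstructed descent map. -/
def PsiK (Cd : CModData A B F) (hC : IsCMod A B F Cd) (db : DualBasis A B F) (x y : X) :
    DTc A B F (KMod A B F Cd) x y →ₗ[k] DT2c A B F (KMod A B F Cd) x y :=
  btDesc k _ _ ((dt2mk A B F (KMod A B F Cd) x y).comp (KsigL A B F Cd hC db x x)) (by
    intro m0 b a
    show dt2mk A B F (KMod A B F Cd) x y
        (Ksig A B F Cd db x x ((KMod A B F Cd).act m0 (F.i x b))) a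
      = dt2mk A B F (KMod A B F Cd) x y (Ksig A B F Cd db x x m0) (A.mul (F.i x b) a)
    rw [Ksig_act A B F Cd hC db m0 (F.i x b)]
    exact btmk_rel k _ _ (Ksig A B F Cd db x x m0) b a)

theorem PsiK_mk (Cd : CModData A B F) (hC : IsCMod A B F Cd) (db : DualBasis A B F)
    (x y : X) (m0 : Cd.M x x) (a : A.M x y) :
    PsiK A B F Cd hC db x y (dtmk A B F (KMod A B F Cd) x y m0 a)
      = dt2mk A B F (KMod A B F Cd) x y (Ksig A B F Cd db x x m0) a := rfl

/-- `(- ⊗ 1) ⊗ id : M ⊗ A → (M ⊗ A) ⊗ A`. -/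
def PsiK' (Md : RModData A) (x y : X) :
    DTc A B F Md x y →ₗ[k] DT2c A B F Md x y :=
  btDesc k _ _ ((dt2mk A B F Md x y).comp ((dtmk A B F Md x x).flip (A.one x))) (by
    intro m0 b a
    show dt2mk A B F Md x y (dtmk A B F Md x x (Md.act m0 (F.i x b)) (A.one x)) a
      = dt2mk A B F Md x y (dtmk A B F Md x x m0 (A.one x)) (A.mul (F.i x b) a)
    rw [btmk_rel k _ _ m0 b (A.one x), A.mul_one]
    have h2 := btmk_rel k (fun (t : DTc A B F Md x x) (b : B.C x) => dtRmul A B F Md (F.i x b) t)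
      (fun (b : B.C x) (a : A.M x y) => A.mul (F.i x b) a)
      (dtmk A B F Md x x m0 (A.one x)) b a
    rw [← h2, dtRmul_mk, A.one_mul])

theorem PsiK'_mk (Md : RModData A) (x y : X) (m0 : Md.M x x) (a : A.M x y) :
    PsiK' A B F Md x y (dtmk A B F Md x y m0 a)
      = dt2mk A B F Md x y (dtmk A B F Md x x m0 (A.one x)) a := rfl

/-- The multiplication map `M ⊗ A → M` for the module `KMod`. -/
def muK (Cd : CModData A B F) (hC : IsCMod A B F Cd) (x y : X) :
    DTc A B F (KMod A B F Cd) x y →ₗ[k] Cd.M x y :=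
  btDesc k _ _
    (LinearMap.mk₂ k (fun (m0 : Cd.M x x) (a : A.M x y) => Cd.act m0 (rmulBL A B F a))
      (fun m0 m0' a => hC.add_act m0 m0' (rmulBL A B F a))
      (fun c m0 a => hC.smul_act c m0 (rmulBL A B F a))
      (fun m0 a a' => (congrArg (Cd.act m0) (rmulBL_add A B F a a')).trans (hC.act_add m0 _ _))
      (fun c m0 a => (congrArg (Cd.act m0) (rmulBL_smul A B F c a)).trans (hC.act_smul c m0 _)))
    (by
      intro m0 b a
      show Cd.act ((KMod A B F Cd).act m0 (F.i x b)) (rmulBL A B F a)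
        = Cd.act m0 (rmulBL A B F (A.mul (F.i x b) a))
      exact (hC.act_comp m0 (rmulBL A B F (F.i x b)) (rmulBL A B F a)).trans
        (congrArg (Cd.act m0) (compBL_rmul A B F _ _)))

theorem muK_mk (Cd : CModData A B F) (hC : IsCMod A B F Cd) (x y : X)
    (m0 : Cd.M x x) (a : A.M x y) :
    muK A B F Cd hC x y (dtmk A B F (KMod A B F Cd) x y m0 a)
      = Cd.act m0 (rmulBL A B F a) := rfl

/-- The map `(t, a) ↦ (t ·(f a)) · g` on `DT2c`, used for `act_comp` of `H`. -/
def PhiHL (D : DescData A B F) (hD : IsDesc A B F D) {x y z w : X}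
    (f : ↥(BLinSub A B F x y z)) (g : ↥(BLinSub A B F x z w)) :
    DT2c A B F D.Md x y →ₗ[k] D.Md.M x w :=
  btDesc k _ _
    (LinearMap.mk₂ k
      (fun (t : DTc A B F D.Md x x) (a : A.M x y) =>
        HactL A B F D hD g (dtRmul A B F D.Md (f.1 a) t))
      (fun t t' a => by rw [map_add, map_add])
      (fun c t a => by rw [map_smul, map_smul])
      (fun t a a' => by rw [map_add f.1 a a', dtRmul_add, LinearMap.add_apply, map_add])
      (fun c t a => by rw [map_smul f.1 c a, dtRmul_smul, LinearMap.smul_apply, map_smul]))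
    (by
      intro t b a
      have hf : ∀ (b : B.C x) (a : A.M x y),
          f.1 (A.mul (F.i x b) a) = A.mul (F.i x b) (f.1 a) := f.2
      show HactL A B F D hD g (dtRmul A B F D.Md (f.1 a) (dtRmul A B F D.Md (F.i x b) t))
        = HactL A B F D hD g (dtRmul A B F D.Md (f.1 (A.mul (F.i x b) a)) t)
      rw [hf b a, dtRmul_comp])

theorem PhiHL_mk (D : DescData A B F) (hD : IsDesc A B F D) {x y z w : X}
    (f : ↥(BLinSub A B F x y z)) (g : ↥(BLinSub A B F x z w))
    (t : DTc A B F D.Md x x) (a : A.M x y) :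
    PhiHL A B F D hD f g (dt2mk A B F D.Md x y t a)
      = HactL A B F D hD g (dtRmul A B F D.Md (f.1 a) t) := rfl

theorem sum_phi_f (db : DualBasis A B F) {x y z : X} (f : ↥(BLinSub A B F x y z)) :
    (∑ j, compBL A B F (dphi A B F db x y j) (rmulBL A B F (f.1 (db.e x y j)))) = f := by
  have hf : ∀ (b : B.C x) (a : A.M x y),
      f.1 (A.mul (F.i x b) a) = A.mul (F.i x b) (f.1 a) := f.2
  apply Subtype.ext
  apply LinearMap.ext
  intro c
  rw [sub_sum_apply]
  calc ∑ j, (compBL A B F (dphi A B F db x y j) (rmulBL A B F (f.1 (db.e x y j)))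
          : A.M x y →ₗ[k] A.M x z) c
      = ∑ j, f.1 (A.mul (F.i x (db.estar x y j c)) (db.e x y j)) :=
        Finset.sum_congr rfl fun j _ => (hf (db.estar x y j c) (db.e x y j)).symm
    _ = f.1 (∑ j, A.mul (F.i x (db.estar x y j c)) (db.e x y j)) := (map_sum f.1 _ _).symm
    _ = f.1 c := by rw [db.dual]

theorem sum_phi_id (db : DualBasis A B F) (x y : X) :
    (∑ j, compBL A B F (dphi A B F db x y j) (rmulBL A B F (db.e x y j)))
      = idBL A B F x y := by
  apply Subtype.ext
  apply LinearMap.ext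
  intro c
  rw [sub_sum_apply]
  exact db.dual x y c

end Aux3
/-- **Statement 14** (Theorem 5.3): if `A` is locally finite as a left `B`-module
(witnessed by a choice `db` of dual bases), then the category of descent data
`Desc_B(A)` and the category `M_𝒜` of right modules over the endocluster
`𝒜 = {}_B End(A)` are isomorphic, via `H(M, σ) = M` with `m · f = m₍₀₎ f(m₍₁₎)`,
with inverse `K` defined by `σ_{xy}(m) = ∑ᵢ m·(i_x ∘ eᵢ*) ⊗ eᵢ`. -/
theorem stmt14 {k X : Type} [CommRing k] (A : KCat k X) (B : DiagAlg k X) (F : XFun B A)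
    (db : DualBasis A B F) :
    -- H is well defined on objects
    (∀ (D : DescData A B F) (hD : IsDesc A B F D), IsCMod A B F (HData A B F D hD))
    ∧
    -- H is well defined on morphisms (it is the identity on underlying maps)
    (∀ (D D' : DescData A B F) (hD : IsDesc A B F D) (hD' : IsDesc A B F D')
      (f : ∀ x y, D.Md.M x y → D'.Md.M x y), IsDescHom A B F D D' f →
      IsCModHom A B F (HData A B F D hD) (HData A B F D' hD') f)
    ∧
    -- K is well defined on objects
    (∀ (Cd : CModData A B F), IsCMod A B F Cd → IsDesc A B F (KDesc A B F Cd db))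
    ∧
    -- K is well defined on morphisms (it is the identity on underlying maps)
    (∀ (Cd Cd' : CModData A B F), IsCMod A B F Cd → IsCMod A B F Cd' →
      ∀ (φ : ∀ x y, Cd.M x y → Cd'.M x y), IsCModHom A B F Cd Cd' φ →
      IsDescHom A B F (KDesc A B F Cd db) (KDesc A B F Cd' db) φ)
    ∧
    -- K ∘ H = id : the reconstructed descent map agrees with the original one
    (∀ (D : DescData A B F) (hD : IsDesc A B F D) (x y : X) (m : D.Md.M x y),
      (∑ j, dtmk A B F D.Md x y
          (Hact A B F D hD m (iestEl A B F (db.estar x y j) (db.estar_blin x y j)))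
          (db.e x y j))
        = D.sig x y m)
    ∧
    -- K ∘ H = id : the `A`-action obtained by restricting the cluster action along
    -- `a ↦ r_a` agrees with the original `A`-action
    (∀ (D : DescData A B F) (hD : IsDesc A B F D) (x y z : X) (m : D.Md.M x y)
      (a : A.M y z), Hact A B F D hD m (rmulBL A B F a) = D.Md.act m a)
    ∧
    -- H ∘ K = id : the cluster action obtained from the reconstructed descent datum
    -- agrees with the original cluster action
    (∀ (Cd : CModData A B F) (hC : IsCMod A B F Cd)
      (hK : IsDesc A B F (KDesc A B F Cd db)) (x y z : X) (m : Cd.M x y)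
      (f : ↥(BLinSub A B F x y z)),
      Hact A B F (KDesc A B F Cd db) hK m f = Cd.act m f) := by
  refine ⟨?_, ?_, ?_, ?_, ?_, ?_, ?_⟩
  · -- H well defined on objects
    intro D hD
    refine ⟨?_, ?_, ?_, ?_, ?_, ?_⟩
    · intro x y z m m' f
      show HactL A B F D hD f (D.sig x y (m + m'))
        = HactL A B F D hD f (D.sig x y m) + HactL A B F D hD f (D.sig x y m')
      exact (congrArg (HactL A B F D hD f) (hD.sig_add x y m m')).trans (map_add _ _ _)
    · intro x y z m f f'
      obtain ⟨n, m0, m1, hrep⟩ := bt_repr _ _ (D.sig x y m)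
      show Hact A B F D hD m (f + f') = Hact A B F D hD m f + Hact A B F D hD m f'
      rw [Hact_repr A B F D hD m (f + f') hrep, Hact_repr A B F D hD m f hrep,
        Hact_repr A B F D hD m f' hrep, ← Finset.sum_add_distrib]
      refine Finset.sum_congr rfl fun j _ => ?_
      show D.Md.act (m0 j) ((f.1 + f'.1) (m1 j)) = _
      rw [LinearMap.add_apply, hD.mod.act_add]
    · intro x y z c m f
      show HactL A B F D hD f (D.sig x y (c • m)) = c • HactL A B F D hD f (D.sig x y m)
      exact (congrArg (HactL A B F D hD f) (hD.sig_smul x y c m)).trans (map_smul _ _ _)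
    · intro x y z c m f
      obtain ⟨n, m0, m1, hrep⟩ := bt_repr _ _ (D.sig x y m)
      show Hact A B F D hD m (c • f) = c • Hact A B F D hD m f
      rw [Hact_repr A B F D hD m (c • f) hrep, Hact_repr A B F D hD m f hrep,
        Finset.smul_sum]
      refine Finset.sum_congr rfl fun j _ => ?_
      show D.Md.act (m0 j) ((c • f.1) (m1 j)) = _
      rw [LinearMap.smul_apply, hD.mod.act_smul]
    · intro x y z w m f g
      obtain ⟨n, m0, m1, hrep⟩ := bt_repr _ _ (D.sig x y m)
      have hc2 := hD.c2 x y m n m0 m1 hrep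
      have h1 : Hact A B F D hD m f = ∑ j, D.Md.act (m0 j) (f.1 (m1 j)) :=
        Hact_repr A B F D hD m f hrep
      show Hact A B F D hD (Hact A B F D hD m f) g = Hact A B F D hD m (compBL A B F f g)
      calc Hact A B F D hD (Hact A B F D hD m f) g
          = HactL A B F D hD g (D.sig x z (∑ j, D.Md.act (m0 j) (f.1 (m1 j)))) := by
            rw [← h1]; rfl
        _ = ∑ j, HactL A B F D hD g (D.sig x z (D.Md.act (m0 j) (f.1 (m1 j)))) := by
            rw [sig_sum A B F D hD, map_sum]
        _ = ∑ j, PhiHL A B F D hD f g (dt2mk A B F D.Md x y (D.sig x x (m0 j)) (m1 j)) :=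
            Finset.sum_congr rfl fun j _ => by
              rw [PhiHL_mk, hD.c1 x x z (m0 j) (f.1 (m1 j))]
        _ = PhiHL A B F D hD f g (∑ j, dt2mk A B F D.Md x y (D.sig x x (m0 j)) (m1 j)) :=
            (map_sum _ _ _).symm
        _ = PhiHL A B F D hD f g
              (∑ j, dt2mk A B F D.Md x y (dtmk A B F D.Md x x (m0 j) (A.one x)) (m1 j)) := by
            rw [hc2]
        _ = ∑ j, PhiHL A B F D hD f g
              (dt2mk A B F D.Md x y (dtmk A B F D.Md x x (m0 j) (A.one x)) (m1 j)) :=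
            map_sum _ _ _
        _ = ∑ j, D.Md.act (m0 j) ((compBL A B F f g).1 (m1 j)) :=
            Finset.sum_congr rfl fun j _ => by
              rw [PhiHL_mk, dtRmul_mk, A.one_mul, HactL_mk]; rfl
        _ = Hact A B F D hD m (compBL A B F f g) :=
            (Hact_repr A B F D hD m (compBL A B F f g) hrep).symm
    · intro x y m
      obtain ⟨n, m0, m1, hrep⟩ := bt_repr _ _ (D.sig x y m)
      show Hact A B F D hD m (idBL A B F x y) = m
      rw [Hact_repr A B F D hD m (idBL A B F x y) hrep]
      exact hD.c3 x y m n m0 m1 hrep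
  · -- H well defined on morphisms
    intro D D' hD hD' f hf
    refine ⟨hf.mod.map_add, hf.mod.map_smul, ?_⟩
    intro x y z m g
    obtain ⟨n, m0, m1, hrep⟩ := bt_repr _ _ (D.sig x y m)
    have h2 : Hact A B F D' hD' (f x y m) g
        = ∑ j, D'.Md.act (f x x (m0 j)) (g.1 (m1 j)) :=
      Hact_repr A B F D' hD' (f x y m) g (hf.compat x y m n m0 m1 hrep)
    show f x z (Hact A B F D hD m g) = Hact A B F D' hD' (f x y m) g
    calc f x z (Hact A B F D hD m g)
        = ∑ j, f x z (D.Md.act (m0 j) (g.1 (m1 j))) := by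
          rw [Hact_repr A B F D hD m g hrep]
          exact map_sum (mkLin (f x z) (hf.mod.map_add x z)
            (fun c u => hf.mod.map_smul x z c u)) _ Finset.univ
      _ = ∑ j, D'.Md.act (f x x (m0 j)) (g.1 (m1 j)) :=
          Finset.sum_congr rfl fun j _ => hf.mod.map_act x x z (m0 j) (g.1 (m1 j))
      _ = Hact A B F D' hD' (f x y m) g := h2.symm
  · -- K well defined on objects
    intro Cd hC
    refine ⟨⟨?_, ?_, ?_, ?_, ?_, ?_⟩, ?_, ?_, ?_, ?_, ?_⟩
    · intro x y z m m' a
      exact hC.add_act m m' (rmulBL A B F a)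
    · intro x y z m a a'
      show Cd.act m (rmulBL A B F (a + a')) = _
      rw [rmulBL_add]
      exact hC.act_add m _ _
    · intro x y z c m a
      exact hC.smul_act c m (rmulBL A B F a)
    · intro x y z c m a
      show Cd.act m (rmulBL A B F (c • a)) = _
      rw [rmulBL_smul]
      exact hC.act_smul c m _
    · intro x y z w m a b
      show Cd.act (Cd.act m (rmulBL A B F a)) (rmulBL A B F b)
        = Cd.act m (rmulBL A B F (A.mul a b))
      exact (hC.act_comp m _ _).trans (congrArg (Cd.act m) (compBL_rmul A B F a b))
    · intro x y m
      show Cd.act m (rmulBL A B F (A.one y)) = m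
      rw [rmulBL_one]
      exact hC.act_id m
    · intro x y m m'
      exact map_add (KsigL A B F Cd hC db x y) m m'
    · intro x y c m
      exact map_smul (KsigL A B F Cd hC db x y) c m
    · intro x y z m a
      exact Ksig_act A B F Cd hC db m a
    · -- c2
      intro x y m n m0 m1 hrep
      have hrep' : Ksig A B F Cd db x y m
          = ∑ j, dtmk A B F (KMod A B F Cd) x y (m0 j) (m1 j) := hrep
      have hPsi : ∑ j, dt2mk A B F (KMod A B F Cd) x y
            (Ksig A B F Cd db x x (m0 j)) (m1 j)
          = PsiK A B F Cd hC db x y (Ksig A B F Cd db x y m) := by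
        rw [hrep', map_sum]
        exact Finset.sum_congr rfl fun j _ =>
          (PsiK_mk A B F Cd hC db x y (m0 j) (m1 j)).symm
      have hPsi' : ∑ j, dt2mk A B F (KMod A B F Cd) x y
            (dtmk A B F (KMod A B F Cd) x x (m0 j) (A.one x)) (m1 j)
          = PsiK' A B F (KMod A B F Cd) x y (Ksig A B F Cd db x y m) := by
        rw [hrep', map_sum]
        exact Finset.sum_congr rfl fun j _ =>
          (PsiK'_mk A B F (KMod A B F Cd) x y (m0 j) (m1 j)).symm
      show ∑ j, dt2mk A B F (KMod A B F Cd) x y (Ksig A B F Cd db x x (m0 j)) (m1 j)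
        = ∑ j, dt2mk A B F (KMod A B F Cd) x y
            (dtmk A B F (KMod A B F Cd) x x (m0 j) (A.one x)) (m1 j)
      rw [hPsi, hPsi']
      unfold Ksig
      rw [map_sum, map_sum]
      refine Finset.sum_congr rfl fun l _ => ?_
      rw [PsiK_mk]
      exact (congrArg (fun t => dt2mk A B F (KMod A B F Cd) x y t (db.e x y l))
        (Ksig_phi A B F Cd hC db x y m l)).trans (PsiK'_mk A B F (KMod A B F Cd) x y _ _).symm
    · -- c3
      intro x y m n m0 m1 hrep
      have hrep' : Ksig A B F Cd db x y m
          = ∑ j, dtmk A B F (KMod A B F Cd) x y (m0 j) (m1 j) := hrep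
      calc @id (Cd.M x y) (∑ j, (KMod A B F Cd).act (m0 j) (m1 j))
          = muK A B F Cd hC x y (Ksig A B F Cd db x y m) := by
            rw [hrep', map_sum]
            exact Finset.sum_congr rfl fun j _ => rfl
        _ = ∑ l, Cd.act m (compBL A B F (dphi A B F db x y l)
              (rmulBL A B F (db.e x y l))) := by
            unfold Ksig
            rw [map_sum]
            exact Finset.sum_congr rfl fun l _ => by
              rw [muK_mk]; exact hC.act_comp m _ _
        _ = Cd.act m (∑ l, compBL A B F (dphi A B F db x y l)
              (rmulBL A B F (db.e x y l))) := (cact_sum A B F Cd hC m _).symm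
        _ = @id (Cd.M x y) m := by rw [sum_phi_id A B F db x y]; exact hC.act_id m
  · -- K well defined on morphisms
    intro Cd Cd' hC hC' φ hφ
    refine ⟨⟨hφ.map_add, hφ.map_smul, ?_⟩, ?_⟩
    · intro x y z m a
      exact hφ.map_act x y z m (rmulBL A B F a)
    · intro x y m n m0 m1 hrep
      have hrep' : Ksig A B F Cd db x y m
          = ∑ j, dtmk A B F (KMod A B F Cd) x y (m0 j) (m1 j) := hrep
      let L : DTc A B F (KMod A B F Cd) x y →ₗ[k] DTc A B F (KMod A B F Cd') x y :=
        btMapLeft (fun (u : Cd.M x x) (b : B.C x) => (KMod A B F Cd).act u (F.i x b))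
          (fun (u : Cd'.M x x) (b : B.C x) => (KMod A B F Cd').act u (F.i x b))
          (fun (b : B.C x) (a : A.M x y) => A.mul (F.i x b) a)
          (mkLin (φ x x) (hφ.map_add x x) (fun c u => hφ.map_smul x x c u))
          (fun u b => hφ.map_act x x x u (rmulBL A B F (F.i x b)))
      have hL : ∀ (u : Cd.M x x) (a : A.M x y),
          L (dtmk A B F (KMod A B F Cd) x y u a)
            = dtmk A B F (KMod A B F Cd') x y (φ x x u) a := fun u a =>
        btMapLeft_mk _ _ _ _ _ u a
      show Ksig A B F Cd' db x y (φ x y m)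
        = ∑ j, dtmk A B F (KMod A B F Cd') x y (φ x x (m0 j)) (m1 j)
      calc Ksig A B F Cd' db x y (φ x y m)
          = ∑ l, L (dtmk A B F (KMod A B F Cd) x y
              (Cd.act m (dphi A B F db x y l)) (db.e x y l)) := by
            rw [Ksig]
            exact Finset.sum_congr rfl fun l _ => by
              rw [hL]
              exact congrArg (fun u => dtmk A B F (KMod A B F Cd') x y u (db.e x y l))
                (hφ.map_act x y x m _).symm
        _ = L (Ksig A B F Cd db x y m) := (map_sum L _ _).symm
        _ = ∑ j, L (dtmk A B F (KMod A B F Cd) x y (m0 j) (m1 j)) := by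
            rw [hrep', map_sum]
        _ = ∑ j, dtmk A B F (KMod A B F Cd') x y (φ x x (m0 j)) (m1 j) :=
            Finset.sum_congr rfl fun j _ => hL _ _
  · -- K ∘ H = id on sigma
    intro D hD x y m
    obtain ⟨n, m0, m1, hrep⟩ := bt_repr _ _ (D.sig x y m)
    calc ∑ j, dtmk A B F D.Md x y
          (Hact A B F D hD m (iestEl A B F (db.estar x y j) (db.estar_blin x y j)))
          (db.e x y j)
        = ∑ j, ∑ l, dtmk A B F D.Md x y
            (D.Md.act (m0 l) (F.i x (db.estar x y j (m1 l)))) (db.e x y j) := by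
          refine Finset.sum_congr rfl fun j _ => ?_
          rw [Hact_repr A B F D hD m (dphi A B F db x y j) hrep, dtmk_sum]
          exact Finset.sum_congr rfl fun l _ => rfl
      _ = ∑ l, ∑ j, dtmk A B F D.Md x y
            (D.Md.act (m0 l) (F.i x (db.estar x y j (m1 l)))) (db.e x y j) := Finset.sum_comm
      _ = ∑ l, ∑ j, dtmk A B F D.Md x y (m0 l)
            (A.mul (F.i x (db.estar x y j (m1 l))) (db.e x y j)) :=
          Finset.sum_congr rfl fun l _ => Finset.sum_congr rfl fun j _ =>
            btmk_rel k _ _ (m0 l) (db.estar x y j (m1 l)) (db.e x y j)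
      _ = ∑ l, dtmk A B F D.Md x y (m0 l) (m1 l) :=
          Finset.sum_congr rfl fun l _ => by
            rw [← map_sum (dtmk A B F D.Md x y (m0 l)) _ Finset.univ, db.dual x y (m1 l)]
      _ = D.sig x y m := hrep.symm
  · -- K ∘ H = id on the action
    intro D hD x y z m a
    obtain ⟨n, m0, m1, hrep⟩ := bt_repr _ _ (D.sig x y m)
    calc Hact A B F D hD m (rmulBL A B F a)
        = ∑ l, D.Md.act (m0 l) (A.mul (m1 l) a) :=
          Hact_repr A B F D hD m (rmulBL A B F a) hrep
      _ = ∑ l, D.Md.act (D.Md.act (m0 l) (m1 l)) a :=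
          Finset.sum_congr rfl fun l _ => (hD.mod.act_assoc (m0 l) (m1 l) a).symm
      _ = D.Md.act (∑ l, D.Md.act (m0 l) (m1 l)) a :=
          (map_sum (actL A D.Md hD.mod a) _ Finset.univ).symm
      _ = D.Md.act m a := by rw [hD.c3 x y m n m0 m1 hrep]
  · -- H ∘ K = id
    intro Cd hC hK x y z m f
    calc @id (Cd.M x z) (Hact A B F (KDesc A B F Cd db) hK m f)
        = ∑ j, Cd.act m (compBL A B F (dphi A B F db x y j)
            (rmulBL A B F (f.1 (db.e x y j)))) := by
          have h := Hact_repr A B F (KDesc A B F Cd db) hK m f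
            (rfl : (KDesc A B F Cd db).sig x y m
              = ∑ j, dtmk A B F (KDesc A B F Cd db).Md x y
                  (Cd.act m (dphi A B F db x y j)) (db.e x y j))
          rw [h]
          exact Finset.sum_congr rfl fun j _ => hC.act_comp m _ _
      _ = Cd.act m (∑ j, compBL A B F (dphi A B F db x y j)
            (rmulBL A B F (f.1 (db.e x y j)))) := (cact_sum A B F Cd hC m _).symm
      _ = Cd.act m f := by rw [sum_phi_f A B F db f]

end Paper
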